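/- Let G ∈ ℝ^{d×M}, ρ > 0, λ* ∈ argmin_{λ ∈ Δ^M} ‖Gλ‖², and λ*_ρ ∈ argmin_{λ ∈ Δ^M} (‖Gλ‖² + ρ‖λ‖²). Then 0 ≤ ‖Gλ*_ρ‖² − ‖Gλ*‖² ≤ ρ(1 − 1/M). -/
import Mathlib


/-- Regularization bias: if `λ*` minimizes `‖Gλ‖²` over the simplex and `λ*_ρ`
minimizes `‖Gλ‖² + ρ‖λ‖²` over the simplex, then
`0 ≤ ‖Gλ*_ρ‖² − ‖Gλ*‖² ≤ ρ(1 − 1/M)`. -/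
theorem regularized_min_norm_gap
    {d M : ℕ} (hM : 0 < M) (ρ : ℝ) (hρ : 0 < ρ)
    (g : Fin M → EuclideanSpace ℝ (Fin d))
    (lamStar lamRho : EuclideanSpace ℝ (Fin M))
    (hstar_nonneg : ∀ i, 0 ≤ lamStar i) (hstar_sum : ∑ i, lamStar i = 1)
    (hrho_nonneg : ∀ i, 0 ≤ lamRho i) (hrho_sum : ∑ i, lamRho i = 1)
    (hstar_min : ∀ lam : EuclideanSpace ℝ (Fin M), (∀ i, 0 ≤ lam i) → (∑ i, lam i = 1) →
      ‖∑ m, lamStar m • g m‖ ^ 2 ≤ ‖∑ m, lam m • g m‖ ^ 2)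
    (hrho_min : ∀ lam : EuclideanSpace ℝ (Fin M), (∀ i, 0 ≤ lam i) → (∑ i, lam i = 1) →
      ‖∑ m, lamRho m • g m‖ ^ 2 + ρ * ‖lamRho‖ ^ 2
        ≤ ‖∑ m, lam m • g m‖ ^ 2 + ρ * ‖lam‖ ^ 2) :
    0 ≤ ‖∑ m, lamRho m • g m‖ ^ 2 - ‖∑ m, lamStar m • g m‖ ^ 2 ∧
    ‖∑ m, lamRho m • g m‖ ^ 2 - ‖∑ m, lamStar m • g m‖ ^ 2 ≤ ρ * (1 - 1 / M) := by
  have hlow := hstar_min lamRho hrho_nonneg hrho_sum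
  refine ⟨by linarith, ?_⟩
  have hnorm : ∀ (lam : EuclideanSpace ℝ (Fin M)), ‖lam‖ ^ 2 = ∑ i, lam i ^ 2 := by
    intro lam
    rw [EuclideanSpace.norm_eq, Real.sq_sqrt (by positivity)]
    simp [sq_abs]
  -- ‖lamStar‖² ≤ 1
  have h1 : ‖lamStar‖ ^ 2 ≤ 1 := by
    rw [hnorm, ← hstar_sum]
    apply Finset.sum_le_sum
    intro i _
    have hle : lamStar i ≤ 1 := by
      rw [← hstar_sum]
      exact Finset.single_le_sum (fun j _ => hstar_nonneg j) (Finset.mem_univ i)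
    nlinarith [hstar_nonneg i]
  -- 1/M ≤ ‖lamRho‖²
  have h2 : 1 / (M : ℝ) ≤ ‖lamRho‖ ^ 2 := by
    have hcs : ((∑ i, lamRho i) ^ 2 : ℝ) ≤ (Finset.univ.card : ℝ) * ∑ i, lamRho i ^ 2 :=
      sq_sum_le_card_mul_sum_sq
    rw [hrho_sum] at hcs
    simp only [Finset.card_univ, Fintype.card_fin] at hcs
    rw [hnorm, div_le_iff₀ (by exact_mod_cast hM), mul_comm]
    simpa using hcs
  have hup := hrho_min lamStar hstar_nonneg hstar_sum
  have hM' : (0:ℝ) < M := by exact_mod_cast hM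
  have : ρ * (1 / (M:ℝ)) ≤ ρ * ‖lamRho‖ ^ 2 := by nlinarith
  nlinarith
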